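/- The coloring lower-bound graph G_{x,y} is 3-colorable if and only if x and y are not disjoint, i.e., if and only if there exists a pair (i,j) ∈ {0,…,k−1}² with x[i,j] = y[i,j] = 1. -/
import Mathlib


/-- Vertices of the coloring lower-bound graph.  The side `s : Bool`
distinguishes Alice (`false`, the `a`'s) from Bob (`true`, the `b`'s), and
`ℓ : Bool` distinguishes index `1` (`false`) from index `2` (`true`).
So `node false false i = a_1^i`, `bar s ℓ i = s̄_ℓ^i`, `dbar s ℓ i = s̿_ℓ^i`,
`f s ℓ h = f_S^h`, `t s ℓ h = t_S^h`, `c false m = c_a^m`, `c true m = c_b^m`. -/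
inductive CVertex (k logk : ℕ) where
  | node (s ℓ : Bool) (i : Fin k)
  | bar (s ℓ : Bool) (i : Fin k)
  | dbar (s ℓ : Bool) (i : Fin k)
  | f (s ℓ : Bool) (h : Fin logk)
  | t (s ℓ : Bool) (h : Fin logk)
  | c (s : Bool) (m : Fin 3)
deriving DecidableEq

/-- The index, among `{0,1,2}`, of the `c`-node attached to the bit-nodes of the
sets indexed by `ℓ` (i.e. `1` for `ℓ = 1` and `2` for `ℓ = 2`). -/
def ownIdx (ℓ : Bool) : Fin 3 := if ℓ then 2 else 1

/-- The "other" index: `2` for `ℓ = 1` and `1` for `ℓ = 2`. -/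
def othIdx (ℓ : Bool) : Fin 3 := if ℓ then 1 else 2

/-- Base relation generating the edges (i)–(x) of the coloring lower-bound graph
`G_{x,y}`. -/
def cRel (k logk : ℕ) (x y : Fin k → Fin k → Bool) (u v : CVertex k logk) : Prop :=
  -- (i) each node s_ℓ^i is adjacent to exactly its bit-nodes bin(s_ℓ^i)
  (∃ (s ℓ : Bool) (i : Fin k) (h : Fin logk), u = CVertex.node s ℓ i ∧
    v = if i.val.testBit h.val then CVertex.t s ℓ h else CVertex.f s ℓ h) ∨
  -- (ii) the 4-cycles on the bit-nodes
  (∃ (ℓ : Bool) (h : Fin logk),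
    (u = CVertex.f false ℓ h ∧ v = CVertex.t false ℓ h) ∨
    (u = CVertex.t false ℓ h ∧ v = CVertex.f true ℓ h) ∨
    (u = CVertex.f true ℓ h ∧ v = CVertex.t true ℓ h) ∨
    (u = CVertex.t true ℓ h ∧ v = CVertex.f false ℓ h)) ∨
  -- (iii) the two triangles on the c-nodes, and c_a^m ~ c_b^m' for m ≠ m'
  (∃ (s : Bool) (m m' : Fin 3), m ≠ m' ∧ u = CVertex.c s m ∧ v = CVertex.c s m') ∨
  (∃ (m m' : Fin 3), m ≠ m' ∧ u = CVertex.c false m ∧ v = CVertex.c true m') ∨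
  -- (iv) the path edges (s_ℓ^i, s̄_ℓ^i), (s̄_ℓ^i, s̿_ℓ^i), (s̿_ℓ^i, s̄_ℓ^{i+1})
  (∃ (s ℓ : Bool) (i : Fin k), u = CVertex.node s ℓ i ∧ v = CVertex.bar s ℓ i) ∨
  (∃ (s ℓ : Bool) (i : Fin k), u = CVertex.bar s ℓ i ∧ v = CVertex.dbar s ℓ i) ∨
  (∃ (s ℓ : Bool) (i : Fin k) (hi : i.val + 1 < k),
    u = CVertex.dbar s ℓ i ∧ v = CVertex.bar s ℓ ⟨i.val + 1, hi⟩) ∨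
  -- (v) c_s^ℓ adjacent to every bit-node of the sets indexed by ℓ
  (∃ (s ℓ : Bool) (h : Fin logk), u = CVertex.c s (ownIdx ℓ) ∧
    (v = CVertex.f s ℓ h ∨ v = CVertex.t s ℓ h)) ∨
  -- (vi)–(ix) c_s^{oth ℓ} ~ s_ℓ^i, c_s^{own ℓ} ~ s̿_ℓ^i,
  --           c_s^{oth ℓ} ~ s̄_ℓ^0 and c_s^{oth ℓ} ~ s̿_ℓ^{k−1}
  (∃ (s ℓ : Bool) (i : Fin k), u = CVertex.c s (othIdx ℓ) ∧ v = CVertex.node s ℓ i) ∨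
  (∃ (s ℓ : Bool) (i : Fin k), u = CVertex.c s (ownIdx ℓ) ∧ v = CVertex.dbar s ℓ i) ∨
  (∃ (s ℓ : Bool) (i : Fin k), i.val = 0 ∧
    u = CVertex.c s (othIdx ℓ) ∧ v = CVertex.bar s ℓ i) ∨
  (∃ (s ℓ : Bool) (i : Fin k), i.val = k - 1 ∧
    u = CVertex.c s (othIdx ℓ) ∧ v = CVertex.dbar s ℓ i) ∨
  -- (x) the input edges
  (∃ i j : Fin k, x i j = false ∧
    u = CVertex.node false false i ∧ v = CVertex.node false true j) ∨
  (∃ i j : Fin k, y i j = false ∧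
    u = CVertex.node true false i ∧ v = CVertex.node true true j)

/-- The coloring lower-bound graph `G_{x,y}`. -/
def cGraph (k logk : ℕ) (x y : Fin k → Fin k → Bool) : SimpleGraph (CVertex k logk) :=
  SimpleGraph.fromRel (cRel k logk x y)

section Aux

lemma fin3_res1 : ∀ (ℓ : Bool) (m : Fin 3), m ≠ 0 → m ≠ ownIdx ℓ → m = othIdx ℓ := by
  decide

lemma fin3_res2 : ∀ (ℓ : Bool) (m : Fin 3), m ≠ 0 → m ≠ othIdx ℓ → m = ownIdx ℓ := by
  decide

lemma fin3_res3 : ∀ (ℓ : Bool) (m : Fin 3), m ≠ ownIdx ℓ → m ≠ othIdx ℓ → m = 0 := by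
  decide

/-- A decidable fact about 4-cycles avoiding a color in `Fin 3`. -/
lemma fin3_cycle : ∀ p a b c d : Fin 3, a ≠ p → b ≠ p → c ≠ p → d ≠ p →
    a ≠ b → b ≠ c → c ≠ d → d ≠ a → a = c ∧ b = d := by decide

variable {k logk : ℕ} {x y : Fin k → Fin k → Bool}

/- Constructor lemmas for the 14 disjuncts of `cRel`. -/
lemma crel_d1 (s ℓ : Bool) (i : Fin k) (h : Fin logk) :
    cRel k logk x y (.node s ℓ i)
      (if i.val.testBit h.val then CVertex.t s ℓ h else CVertex.f s ℓ h) :=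
  Or.inl ⟨s, ℓ, i, h, rfl, rfl⟩

lemma crel_d2a (ℓ : Bool) (h : Fin logk) :
    cRel k logk x y (.f false ℓ h) (.t false ℓ h) :=
  Or.inr <| Or.inl ⟨ℓ, h, Or.inl ⟨rfl, rfl⟩⟩

lemma crel_d2b (ℓ : Bool) (h : Fin logk) :
    cRel k logk x y (.t false ℓ h) (.f true ℓ h) :=
  Or.inr <| Or.inl ⟨ℓ, h, Or.inr <| Or.inl ⟨rfl, rfl⟩⟩

lemma crel_d2c (ℓ : Bool) (h : Fin logk) :
    cRel k logk x y (.f true ℓ h) (.t true ℓ h) :=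
  Or.inr <| Or.inl ⟨ℓ, h, Or.inr <| Or.inr <| Or.inl ⟨rfl, rfl⟩⟩

lemma crel_d2d (ℓ : Bool) (h : Fin logk) :
    cRel k logk x y (.t true ℓ h) (.f false ℓ h) :=
  Or.inr <| Or.inl ⟨ℓ, h, Or.inr <| Or.inr <| Or.inr ⟨rfl, rfl⟩⟩

lemma crel_d3 (s : Bool) {m m' : Fin 3} (hmm : m ≠ m') :
    cRel k logk x y (.c s m) (.c s m') :=
  Or.inr <| Or.inr <| Or.inl ⟨s, m, m', hmm, rfl, rfl⟩

lemma crel_d4 {m m' : Fin 3} (hmm : m ≠ m') :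
    cRel k logk x y (.c false m) (.c true m') :=
  Or.inr <| Or.inr <| Or.inr <| Or.inl ⟨m, m', hmm, rfl, rfl⟩

lemma crel_d5 (s ℓ : Bool) (i : Fin k) :
    cRel k logk x y (.node s ℓ i) (.bar s ℓ i) :=
  Or.inr <| Or.inr <| Or.inr <| Or.inr <| Or.inl ⟨s, ℓ, i, rfl, rfl⟩

lemma crel_d6 (s ℓ : Bool) (i : Fin k) :
    cRel k logk x y (.bar s ℓ i) (.dbar s ℓ i) :=
  Or.inr <| Or.inr <| Or.inr <| Or.inr <| Or.inr <| Or.inl ⟨s, ℓ, i, rfl, rfl⟩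

lemma crel_d7 (s ℓ : Bool) (i : Fin k) (hi : i.val + 1 < k) :
    cRel k logk x y (.dbar s ℓ i) (.bar s ℓ ⟨i.val + 1, hi⟩) :=
  Or.inr <| Or.inr <| Or.inr <| Or.inr <| Or.inr <| Or.inr <| Or.inl
    ⟨s, ℓ, i, hi, rfl, rfl⟩

lemma crel_d8f (s ℓ : Bool) (h : Fin logk) :
    cRel k logk x y (.c s (ownIdx ℓ)) (.f s ℓ h) :=
  Or.inr <| Or.inr <| Or.inr <| Or.inr <| Or.inr <| Or.inr <| Or.inr <| Or.inl
    ⟨s, ℓ, h, rfl, Or.inl rfl⟩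

lemma crel_d8t (s ℓ : Bool) (h : Fin logk) :
    cRel k logk x y (.c s (ownIdx ℓ)) (.t s ℓ h) :=
  Or.inr <| Or.inr <| Or.inr <| Or.inr <| Or.inr <| Or.inr <| Or.inr <| Or.inl
    ⟨s, ℓ, h, rfl, Or.inr rfl⟩

lemma crel_d9 (s ℓ : Bool) (i : Fin k) :
    cRel k logk x y (.c s (othIdx ℓ)) (.node s ℓ i) :=
  Or.inr <| Or.inr <| Or.inr <| Or.inr <| Or.inr <| Or.inr <| Or.inr <| Or.inr <|
    Or.inl ⟨s, ℓ, i, rfl, rfl⟩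

lemma crel_d10 (s ℓ : Bool) (i : Fin k) :
    cRel k logk x y (.c s (ownIdx ℓ)) (.dbar s ℓ i) :=
  Or.inr <| Or.inr <| Or.inr <| Or.inr <| Or.inr <| Or.inr <| Or.inr <| Or.inr <|
    Or.inr <| Or.inl ⟨s, ℓ, i, rfl, rfl⟩

lemma crel_d11 (s ℓ : Bool) (i : Fin k) (hi0 : i.val = 0) :
    cRel k logk x y (.c s (othIdx ℓ)) (.bar s ℓ i) :=
  Or.inr <| Or.inr <| Or.inr <| Or.inr <| Or.inr <| Or.inr <| Or.inr <| Or.inr <|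
    Or.inr <| Or.inr <| Or.inl ⟨s, ℓ, i, hi0, rfl, rfl⟩

lemma crel_d12 (s ℓ : Bool) (i : Fin k) (hik : i.val = k - 1) :
    cRel k logk x y (.c s (othIdx ℓ)) (.dbar s ℓ i) :=
  Or.inr <| Or.inr <| Or.inr <| Or.inr <| Or.inr <| Or.inr <| Or.inr <| Or.inr <|
    Or.inr <| Or.inr <| Or.inr <| Or.inl ⟨s, ℓ, i, hik, rfl, rfl⟩

lemma crel_d13 {i j : Fin k} (hxij : x i j = false) :
    cRel k logk x y (.node false false i) (.node false true j) :=
  Or.inr <| Or.inr <| Or.inr <| Or.inr <| Or.inr <| Or.inr <| Or.inr <| Or.inr <|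
    Or.inr <| Or.inr <| Or.inr <| Or.inr <| Or.inl ⟨i, j, hxij, rfl, rfl⟩

lemma crel_d14 {i j : Fin k} (hyij : y i j = false) :
    cRel k logk x y (.node true false i) (.node true true j) :=
  Or.inr <| Or.inr <| Or.inr <| Or.inr <| Or.inr <| Or.inr <| Or.inr <| Or.inr <|
    Or.inr <| Or.inr <| Or.inr <| Or.inr <| Or.inr ⟨i, j, hyij, rfl, rfl⟩

end Aux

/-- The explicit 3-coloring of `G_{x,y}` when `x i0 j0 = y i0 j0 = 1`. -/
def cCol (k logk : ℕ) (i0 j0 : Fin k) : CVertex k logk → Fin 3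
  | .c _ m => m
  | .node _ ℓ i =>
      if ℓ then (if i = j0 then 0 else 2) else (if i = i0 then 0 else 1)
  | .f _ ℓ h =>
      if ℓ then (if j0.val.testBit h.val then 0 else 1)
      else (if i0.val.testBit h.val then 0 else 2)
  | .t _ ℓ h =>
      if ℓ then (if j0.val.testBit h.val then 1 else 0)
      else (if i0.val.testBit h.val then 2 else 0)
  | .bar _ ℓ i =>
      if ℓ then (if i.val < j0.val then 0 else if i = j0 then 2 else 1)
      else (if i.val < i0.val then 0 else if i = i0 then 1 else 2)
  | .dbar _ ℓ i =>
      if ℓ then (if i.val < j0.val then 1 else 0)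
      else (if i.val < i0.val then 2 else 0)

lemma cCol_proper (k logk : ℕ) (x y : Fin k → Fin k → Bool) (i0 j0 : Fin k)
    (hx : x i0 j0 = true) (hy : y i0 j0 = true) :
    ∀ u v : CVertex k logk, cRel k logk x y u v →
      cCol k logk i0 j0 u ≠ cCol k logk i0 j0 v := by
  intro u v hrel
  rcases hrel with ⟨s, ℓ, i, h, rfl, rfl⟩ | ⟨ℓ, h, hc⟩ | ⟨s, m, m', hmm, rfl, rfl⟩ |
    ⟨m, m', hmm, rfl, rfl⟩ | ⟨s, ℓ, i, rfl, rfl⟩ | ⟨s, ℓ, i, rfl, rfl⟩ |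
    ⟨s, ℓ, i, hi, rfl, rfl⟩ | ⟨s, ℓ, h, rfl, hv⟩ | ⟨s, ℓ, i, rfl, rfl⟩ |
    ⟨s, ℓ, i, rfl, rfl⟩ | ⟨s, ℓ, i, hi0, rfl, rfl⟩ | ⟨s, ℓ, i, hik, rfl, rfl⟩ |
    ⟨i, j, hxij, rfl, rfl⟩ | ⟨i, j, hyij, rfl, rfl⟩
  -- (i) node–bit
  · cases hb : i.val.testBit h.val <;> cases ℓ <;>
      simp only [cCol, hb, if_true, if_false] <;>
      split_ifs <;> simp_all <;> split_ifs <;> simp_all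
  -- (ii) 4-cycles
  · rcases hc with ⟨rfl, rfl⟩ | ⟨rfl, rfl⟩ | ⟨rfl, rfl⟩ | ⟨rfl, rfl⟩ <;> cases ℓ <;>
      simp only [cCol] <;> split_ifs <;> simp_all <;> decide
  -- (iii) triangles
  · simpa [cCol] using hmm
  · simpa [cCol] using hmm
  -- (iv) paths
  · cases ℓ <;> simp only [cCol] <;> split_ifs <;>
      simp_all [Fin.ext_iff] <;> omega
  · cases ℓ <;> simp only [cCol] <;> split_ifs <;>
      simp_all [Fin.ext_iff] <;> omega
  · cases ℓ <;> simp only [cCol] <;> split_ifs <;>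
      simp_all [Fin.ext_iff] <;> omega
  -- (v) c–bits
  · rcases hv with rfl | rfl <;> cases ℓ <;>
      simp only [cCol, ownIdx] <;> split_ifs <;> simp_all <;> decide
  -- (vi)–(ix)
  · cases ℓ <;> simp only [cCol, othIdx] <;> split_ifs <;> simp_all <;> decide
  · cases ℓ <;> simp only [cCol, ownIdx] <;> split_ifs <;> simp_all <;> decide
  · have h1 := i0.2
    have h2 := j0.2
    cases ℓ <;> simp only [cCol, othIdx] <;> split_ifs <;>
      simp_all [Fin.ext_iff] <;> omega
  · have h1 := i0.2
    have h2 := j0.2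
    have h3 := i.2
    cases ℓ <;> simp only [cCol, othIdx] <;> split_ifs <;>
      simp_all [Fin.ext_iff] <;> omega
  -- (x)
  · simp only [cCol] <;> split_ifs <;> simp_all
  · simp only [cCol] <;> split_ifs <;> simp_all

/-- the coloring lower-bound graph `G_{x,y}` is 3-colorable iff
`x` and `y` are not disjoint, i.e. iff there is a pair `(i, j)` with
`x i j = y i j = 1`. -/
theorem cGraph_colorable_iff_not_disjoint (k logk : ℕ) (hk : 2 ≤ k)
    (hpow : k = 2 ^ logk) (x y : Fin k → Fin k → Bool) :
    (cGraph k logk x y).Colorable 3 ↔ ∃ i j : Fin k, x i j = true ∧ y i j = true := by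
  constructor
  · rintro ⟨C⟩
    have hE : ∀ u v, cRel k logk x y u v → u ≠ v → C u ≠ C v := fun u v h hne =>
      C.valid ((SimpleGraph.fromRel_adj _ u v).2 ⟨hne, Or.inl h⟩)
    set π : Fin 3 → Fin 3 := fun m => C (.c false m) with hπdef
    have hπinj : Function.Injective π := by
      intro m m' heq
      by_contra hne
      exact hE (.c false m) (.c false m') (crel_d3 false hne) (by simp [hne]) heq
    have hπsurj : Function.Surjective π := Finite.injective_iff_surjective.mp hπinj
    have hCmem : ∀ v : CVertex k logk, ∃ m, C v = π m := fun v =>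
      (hπsurj (C v)).imp fun m h => h.symm
    have hcs : ∀ (s : Bool) (m : Fin 3), C (.c s m) = π m := by
      intro s m
      cases s
      · rfl
      · obtain ⟨m', hm'⟩ := hCmem (.c true m)
        rcases eq_or_ne m' m with rfl | hne
        · exact hm'
        · exact absurd hm'.symm (hE _ _ (crel_d4 hne) (by simp))
    have hbitf : ∀ (s ℓ : Bool) (h : Fin logk), C (.f s ℓ h) ≠ π (ownIdx ℓ) := by
      intro s ℓ h
      have := hE _ _ (crel_d8f (x := x) (y := y) s ℓ h) (by simp)
      rw [hcs] at this
      exact this.symm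
    have hbitt : ∀ (s ℓ : Bool) (h : Fin logk), C (.t s ℓ h) ≠ π (ownIdx ℓ) := by
      intro s ℓ h
      have := hE _ _ (crel_d8t (x := x) (y := y) s ℓ h) (by simp)
      rw [hcs] at this
      exact this.symm
    have hfne : ∀ (ℓ : Bool) (h : Fin logk), C (.f false ℓ h) ≠ C (.t false ℓ h) :=
      fun ℓ h => hE _ _ (crel_d2a ℓ h) (by simp)
    have hcyc : ∀ (ℓ : Bool) (h : Fin logk),
        C (.f true ℓ h) = C (.f false ℓ h) ∧ C (.t true ℓ h) = C (.t false ℓ h) := by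
      intro ℓ h
      have := fin3_cycle (π (ownIdx ℓ)) (C (.f false ℓ h)) (C (.t false ℓ h))
        (C (.f true ℓ h)) (C (.t true ℓ h)) (hbitf _ _ _) (hbitt _ _ _)
        (hbitf _ _ _) (hbitt _ _ _) (hfne _ _)
        (hE _ _ (crel_d2b ℓ h) (by simp)) (hE _ _ (crel_d2c ℓ h) (by simp))
        (hE _ _ (crel_d2d ℓ h) (by simp))
      exact ⟨this.1.symm, this.2.symm⟩
    -- a node colored `π 0` forces all of its bit-nodes to be colored `π (othIdx ℓ)`
    have hsel_bits : ∀ (s ℓ : Bool) (i : Fin k), C (.node s ℓ i) = π 0 →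
        ∀ h : Fin logk,
          C (if i.val.testBit h.val then CVertex.t s ℓ h else CVertex.f s ℓ h) =
            π (othIdx ℓ) := by
      intro s ℓ i hi h
      have hadj := hE _ _ (crel_d1 (x := x) (y := y) s ℓ i h)
        (by cases i.val.testBit h.val <;> simp)
      set w := (if i.val.testBit h.val then CVertex.t s ℓ h else CVertex.f s ℓ h)
        with hw
      have h1 : C w ≠ π 0 := fun e => hadj (hi.trans e.symm)
      have h2 : C w ≠ π (ownIdx ℓ) := by
        rw [hw]
        cases hb : i.val.testBit h.val
        · simpa using hbitf s ℓ h
        · simpa using hbitt s ℓ h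
      obtain ⟨m, hm⟩ := hCmem w
      have hm0 : m ≠ 0 := fun e => h1 (by rw [hm, e])
      have hmo : m ≠ ownIdx ℓ := fun e => h2 (by rw [hm, e])
      rw [hm, fin3_res1 ℓ m hm0 hmo]
    -- at most one index can be colored `π 0` among the nodes of each pair of sets
    have hsel_unique : ∀ (s s' ℓ : Bool) (i i' : Fin k),
        C (.node s ℓ i) = π 0 → C (.node s' ℓ i') = π 0 → i = i' := by
      intro s s' ℓ i i' hi hi'
      have key : ∀ (t : Bool) (j : Fin k), C (.node t ℓ j) = π 0 → ∀ h : Fin logk,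
          (j.val.testBit h.val = true → C (.t false ℓ h) = π (othIdx ℓ)) ∧
          (j.val.testBit h.val = false → C (.f false ℓ h) = π (othIdx ℓ)) := by
        intro t j hj h
        have e := hsel_bits t ℓ j hj h
        constructor <;> intro hb <;> rw [hb] at e <;> simp at e <;> cases t
        · exact e
        · exact ((hcyc ℓ h).2).symm.trans e
        · exact e
        · exact ((hcyc ℓ h).1).symm.trans e
      have hb : ∀ h : Fin logk, i.val.testBit h.val = i'.val.testBit h.val := by
        intro h
        cases hb1 : i.val.testBit h.val <;> cases hb2 : i'.val.testBit h.val
        · rfl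
        · exact absurd (((key s i hi h).2 hb1).trans ((key s' i' hi' h).1 hb2).symm)
            (hfne ℓ h)
        · exact absurd (((key s' i' hi' h).2 hb2).trans ((key s i hi h).1 hb1).symm)
            (hfne ℓ h)
        · rfl
      apply Fin.ext
      apply Nat.eq_of_testBit_eq
      intro n
      by_cases hn : n < logk
      · exact hb ⟨n, hn⟩
      · rw [Nat.testBit_eq_false_of_lt, Nat.testBit_eq_false_of_lt]
        · calc i'.val < k := i'.2
            _ = 2 ^ logk := hpow
            _ ≤ 2 ^ n := Nat.pow_le_pow_right (by norm_num) (by omega)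
        · calc i.val < k := i.2
            _ = 2 ^ logk := hpow
            _ ≤ 2 ^ n := Nat.pow_le_pow_right (by norm_num) (by omega)
    -- for each pair of sets, some node must be colored `π 0`
    have hexists : ∀ s ℓ : Bool, ∃ i : Fin k, C (.node s ℓ i) = π 0 := by
      intro s ℓ
      by_contra hno
      push_neg at hno
      have hnode : ∀ i : Fin k, C (.node s ℓ i) = π (ownIdx ℓ) := by
        intro i
        obtain ⟨m, hm⟩ := hCmem (.node s ℓ i)
        have h0 : m ≠ 0 := fun e => hno i (by rw [hm, e])
        have h2 : m ≠ othIdx ℓ := by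
          intro e
          exact hE _ _ (crel_d9 (x := x) (y := y) s ℓ i) (by simp)
            (by rw [hcs, hm, e])
        rw [hm, fin3_res2 ℓ m h0 h2]
      have hinv : ∀ n (hn : n < k), C (.bar s ℓ ⟨n, hn⟩) = π 0 ∧
          C (.dbar s ℓ ⟨n, hn⟩) = π (othIdx ℓ) := by
        intro n
        induction n with
        | zero =>
          intro hn
          have hbar : C (.bar s ℓ ⟨0, hn⟩) = π 0 := by
            obtain ⟨m, hm⟩ := hCmem (.bar s ℓ ⟨0, hn⟩)
            have h1 : m ≠ ownIdx ℓ := fun e =>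
              hE _ _ (crel_d5 (x := x) (y := y) s ℓ ⟨0, hn⟩) (by simp)
                (by rw [hnode, hm, e])
            have h2 : m ≠ othIdx ℓ := fun e =>
              hE _ _ (crel_d11 (x := x) (y := y) s ℓ ⟨0, hn⟩ rfl) (by simp)
                (by rw [hcs, hm, e])
            rw [hm, fin3_res3 ℓ m h1 h2]
          refine ⟨hbar, ?_⟩
          obtain ⟨m, hm⟩ := hCmem (.dbar s ℓ ⟨0, hn⟩)
          have h1 : m ≠ ownIdx ℓ := fun e =>
            hE _ _ (crel_d10 (x := x) (y := y) s ℓ ⟨0, hn⟩) (by simp)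
              (by rw [hcs, hm, e])
          have h0 : m ≠ 0 := fun e =>
            hE _ _ (crel_d6 (x := x) (y := y) s ℓ ⟨0, hn⟩) (by simp)
              (by rw [hbar, hm, e])
          rw [hm, fin3_res1 ℓ m h0 h1]
        | succ n ih =>
          intro hn
          have hn' : n < k := by omega
          obtain ⟨ihb, ihd⟩ := ih hn'
          have hbar : C (.bar s ℓ ⟨n + 1, hn⟩) = π 0 := by
            obtain ⟨m, hm⟩ := hCmem (.bar s ℓ ⟨n + 1, hn⟩)
            have h1 : m ≠ ownIdx ℓ := fun e =>
              hE _ _ (crel_d5 (x := x) (y := y) s ℓ ⟨n + 1, hn⟩) (by simp)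
                (by rw [hnode, hm, e])
            have h2 : m ≠ othIdx ℓ := fun e =>
              hE _ _ (crel_d7 (x := x) (y := y) s ℓ ⟨n, hn'⟩ hn) (by simp)
                (by rw [ihd, hm, e])
            rw [hm, fin3_res3 ℓ m h1 h2]
          refine ⟨hbar, ?_⟩
          obtain ⟨m, hm⟩ := hCmem (.dbar s ℓ ⟨n + 1, hn⟩)
          have h1 : m ≠ ownIdx ℓ := fun e =>
            hE _ _ (crel_d10 (x := x) (y := y) s ℓ ⟨n + 1, hn⟩) (by simp)
              (by rw [hcs, hm, e])
          have h0 : m ≠ 0 := fun e =>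
            hE _ _ (crel_d6 (x := x) (y := y) s ℓ ⟨n + 1, hn⟩) (by simp)
              (by rw [hbar, hm, e])
          rw [hm, fin3_res1 ℓ m h0 h1]
      have hlast : k - 1 < k := by omega
      exact hE _ _ (crel_d12 (x := x) (y := y) s ℓ ⟨k - 1, hlast⟩ rfl) (by simp)
        (by rw [hcs, (hinv (k - 1) hlast).2])
    obtain ⟨ia, hia⟩ := hexists false false
    obtain ⟨ib, hib⟩ := hexists true false
    obtain ⟨ja, hja⟩ := hexists false true
    obtain ⟨jb, hjb⟩ := hexists true true
    obtain rfl : ib = ia := hsel_unique true false false ib ia hib hia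
    obtain rfl : jb = ja := hsel_unique true false true jb ja hjb hja
    refine ⟨ib, jb, ?_, ?_⟩
    · by_contra hxf
      have hxf' : x ib jb = false := by simpa using hxf
      exact hE _ _ (crel_d13 hxf') (by simp) (by rw [hia, hja])
    · by_contra hyf
      have hyf' : y ib jb = false := by simpa using hyf
      exact hE _ _ (crel_d14 hyf') (by simp) (by rw [hib, hjb])
  · rintro ⟨i0, j0, hx, hy⟩
    refine ⟨SimpleGraph.Coloring.mk (cCol k logk i0 j0) ?_⟩
    intro u v hadj
    rcases hadj with ⟨hne, h | h⟩
    · exact cCol_proper k logk x y i0 j0 hx hy u v h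
    · exact (cCol_proper k logk x y i0 j0 hx hy v u h).symm
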